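/- Let v̄ ∈ ℝ^K be a unit vector with ⟨v̄, ẽ_1⟩ = β for some β ∈ [0,1]. Then for every p ∈ ℝ^K with nonnegative entries, first entry p_1 = 0, and Σ_{k=1}^K p_k = 1: | (1/(K−1))·Σ_{k=2}^K [v̄]_k − ⟨p, v̄⟩ | ≤ √(1 − β²). -/

import Mathlib

open scoped RealInnerProductSpace
open Finset

noncomputable section

/-- The `k`-th column of the matrix `Ẽ = √(K/(K−1))·(I_K − (1/K)·𝟙𝟙ᵀ)` (the pseudo-label of
class `k`). -/
def etilde (K : ℕ) (k : Fin K) : EuclideanSpace ℝ (Fin K) :=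
  WithLp.toLp 2 (fun l => Real.sqrt ((K : ℝ) / ((K : ℝ) - 1)) * ((if l = k then 1 else 0) - 1 / (K : ℝ)))

/-- Let `v̄ ∈ ℝ^K` be a unit vector with `⟨v̄, ẽ_1⟩ = β ∈ [0,1]`. Then for
every probability vector `p` with `p_1 = 0`,
`|(1/(K−1))·Σ_{k≥2} v̄_k − ⟨p, v̄⟩| ≤ √(1 − β²)`. -/
theorem pseudo_label_average_bound
    (K : ℕ) (hK : 2 ≤ K)
    (vb : EuclideanSpace ℝ (Fin K)) (hvb : ‖vb‖ = 1)
    (β : ℝ) (hβ0 : 0 ≤ β) (hβ1 : β ≤ 1)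
    (hβ : ⟪vb, etilde K ⟨0, by omega⟩⟫ = β)
    (p : EuclideanSpace ℝ (Fin K)) (hp0 : ∀ k, 0 ≤ p k)
    (hp1 : p ⟨0, by omega⟩ = 0) (hps : ∑ k, p k = 1) :
    |(1 / ((K : ℝ) - 1)) *
        (∑ k ∈ Finset.univ.filter fun k => k ≠ (⟨0, by omega⟩ : Fin K), vb k) - ⟪p, vb⟫| ≤
      Real.sqrt (1 - β ^ 2) := by
  have hz : (0:ℕ) < K := by omega
  set z : Fin K := ⟨0, hz⟩ with hzdef
  have hK1 : (1:ℝ) ≤ (K:ℝ) - 1 := by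
    have : (2:ℝ) ≤ (K:ℝ) := by exact_mod_cast hK
    linarith
  have hKpos : (0:ℝ) < (K:ℝ) - 1 := by linarith
  have hKne : (K:ℝ) ≠ 0 := by positivity
  set c : ℝ := Real.sqrt ((K : ℝ) / ((K : ℝ) - 1)) with hc
  have hc2 : c ^ 2 = (K : ℝ) / ((K : ℝ) - 1) := Real.sq_sqrt (by positivity)
  set e := etilde K z with he
  have hcard : (Finset.univ.erase z).card = K - 1 := by
    rw [Finset.card_erase_of_mem (Finset.mem_univ z), Finset.card_univ, Fintype.card_fin]
  have hcardR : ((Finset.univ.erase z).card : ℝ) = (K:ℝ) - 1 := by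
    rw [hcard]; push_cast [Nat.cast_sub (by omega : 1 ≤ K)]; ring
  -- inner product formula
  have inner_eq : ∀ x y : EuclideanSpace ℝ (Fin K), ⟪x, y⟫ = ∑ i, x i * y i := by
    intro x y; rw [PiLp.inner_apply]; simp [RCLike.inner_apply]
    exact Finset.sum_congr rfl (fun i _ => mul_comm _ _)
  have norm_sq_eq : ∀ x : EuclideanSpace ℝ (Fin K), ‖x‖^2 = ∑ i, (x i)^2 := by
    intro x; rw [EuclideanSpace.norm_eq, Real.sq_sqrt (by positivity)]; simp [sq_abs]
  -- e is a unit vector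
  have he_norm : ‖e‖ = 1 := by
    have h2 : ‖e‖^2 = 1 := by
      rw [norm_sq_eq]
      have : ∀ i : Fin K, (e i)^2 = c^2 * ((if i = z then 1 else 0) - 1/(K:ℝ))^2 := by
        intro i; simp only [he, etilde, hc, PiLp.toLp_apply]; ring
      rw [Finset.sum_congr rfl (fun i _ => this i)]
      rw [← Finset.add_sum_erase _ _ (Finset.mem_univ z)]
      have hrest : ∑ i ∈ Finset.univ.erase z, c^2 * ((if i = z then 1 else 0) - 1/(K:ℝ))^2
          = ((K:ℝ) - 1) * (c^2 * (1/(K:ℝ))^2) := by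
        rw [Finset.sum_congr rfl (fun i hi => by
          rw [if_neg (Finset.ne_of_mem_erase hi)])]
        rw [Finset.sum_const, nsmul_eq_mul, hcardR]
        ring
      rw [hrest, if_pos rfl, hc2]
      field_simp
      ring
    nlinarith [norm_nonneg e]
  -- the uniform vector
  set u : EuclideanSpace ℝ (Fin K) := WithLp.toLp 2 (fun k => if k = z then 0 else 1/((K:ℝ)-1) : Fin K → ℝ) with hu
  have hu_apply : ∀ k, u k = if k = z then 0 else 1/((K:ℝ)-1) := fun k => rfl
  -- LHS = ⟪u - p, vb⟫
  have key : (1 / ((K : ℝ) - 1)) *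
        (∑ k ∈ Finset.univ.filter fun k => k ≠ z, vb k) - ⟪p, vb⟫ = ⟪u - p, vb⟫ := by
    rw [inner_sub_left]
    congr 1
    rw [inner_eq, Finset.mul_sum]
    rw [Finset.sum_filter]
    apply Finset.sum_congr rfl
    intro k _
    rw [hu_apply]
    by_cases h : k = z <;> simp [h]
  -- orthogonality
  have horth : ⟪u - p, e⟫ = 0 := by
    rw [inner_sub_left, inner_eq, inner_eq]
    have hue : ∑ i, u i * e i = - c / K := by
      have hterm : ∀ i ∈ Finset.univ.erase z, u i * e i = -(c/(((K:ℝ)-1)*K)) := by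
        intro i hi
        have hne := Finset.ne_of_mem_erase hi
        show (if i = z then 0 else 1/((K:ℝ)-1)) *
          (c * ((if i = z then 1 else 0) - 1/(K:ℝ))) = -(c/(((K:ℝ)-1)*K))
        rw [if_neg hne, if_neg hne]
        field_simp
        ring
      have hz0 : u z * e z = 0 := by rw [hu_apply, if_pos rfl, zero_mul]
      rw [← Finset.add_sum_erase _ _ (Finset.mem_univ z), hz0,
        Finset.sum_congr rfl hterm, Finset.sum_const, nsmul_eq_mul, hcardR]
      field_simp
      ring
    have hpe : ∑ i, p i * e i = - c / K := by
      have : ∀ i : Fin K, p i * e i = c * (p i * (if i = z then 1 else 0)) - c / K * p i := by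
        intro i
        show p i * (c * ((if i = z then 1 else 0) - 1/(K:ℝ))) = _
        split <;> ring
      rw [Finset.sum_congr rfl (fun i _ => this i), Finset.sum_sub_distrib,
        ← Finset.mul_sum, ← Finset.mul_sum, hps]
      have : ∑ i : Fin K, p i * (if i = z then 1 else 0) = p z := by
        simp
      rw [this, hp1]
      show c * 0 - c / K * 1 = - c / K
      ring
    rw [hue, hpe]; ring
  -- norm of u - p at most 1
  have hple : ∀ k, p k ≤ 1 := by
    intro k
    rw [← hps]
    exact Finset.single_le_sum (fun i _ => hp0 i) (Finset.mem_univ k)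
  have hup : ‖u - p‖ ≤ 1 := by
    have h2 : ‖u - p‖^2 ≤ 1 := by
      rw [norm_sq_eq]
      have happ : ∀ i : Fin K, ((u - p) i) = u i - p i := fun i => rfl
      have hsum : ∑ i, ((u - p) i)^2
          = ∑ i ∈ Finset.univ.erase z, (1/((K:ℝ)-1) - p i)^2 := by
        rw [← Finset.add_sum_erase _ _ (Finset.mem_univ z)]
        rw [happ, hu_apply, if_pos rfl, hp1]
        rw [Finset.sum_congr rfl (fun i hi => by
          rw [happ, hu_apply, if_neg (Finset.ne_of_mem_erase hi)])]
        norm_num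
      rw [hsum]
      have hexp : ∀ i : Fin K, (1/((K:ℝ)-1) - p i)^2
          = (1/((K:ℝ)-1))^2 - 2/((K:ℝ)-1) * p i + (p i)^2 := by
        intro i; field_simp; ring
      rw [Finset.sum_congr rfl (fun i _ => hexp i)]
      rw [Finset.sum_add_distrib, Finset.sum_sub_distrib, Finset.sum_const,
        nsmul_eq_mul, hcardR, ← Finset.mul_sum]
      have hpz : ∑ i ∈ Finset.univ.erase z, p i = 1 := by
        rw [Finset.sum_erase_eq_sub (Finset.mem_univ z), hps, hp1, sub_zero]
      have hpsq : ∑ i ∈ Finset.univ.erase z, (p i)^2 ≤ 1 := by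
        calc ∑ i ∈ Finset.univ.erase z, (p i)^2
            ≤ ∑ i ∈ Finset.univ.erase z, p i :=
              Finset.sum_le_sum (fun i _ => by nlinarith [hp0 i, hple i])
          _ = 1 := hpz
      rw [hpz]
      have : ((K:ℝ) - 1) * (1/((K:ℝ)-1))^2 = 1/((K:ℝ)-1) := by field_simp
      rw [this]
      have h1 : 1/((K:ℝ)-1) ≤ 1 := by
        rw [div_le_one hKpos]; linarith
      have h2 : 0 < 1/((K:ℝ)-1) := by positivity
      have h3 : 2/((K:ℝ)-1) = 2 * (1/((K:ℝ)-1)) := by ring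
      linarith
    nlinarith [norm_nonneg (u - p)]
  -- orthogonal decomposition
  set w := vb - β • e with hw
  have hvbw : vb = w + β • e := by rw [hw]; abel
  have hwnorm : ‖w‖ = Real.sqrt (1 - β^2) := by
    have : ‖w‖^2 = 1 - β^2 := by
      have h1 : ⟪vb, e⟫ = β := hβ
      rw [hw, norm_sub_sq_real, real_inner_smul_right, h1, norm_smul, he_norm,
        hvb, Real.norm_eq_abs, abs_of_nonneg hβ0]
      ring
    rw [← this, Real.sqrt_sq (norm_nonneg w)]
  rw [key]
  have hdecomp : ⟪u - p, vb⟫ = ⟪u - p, w⟫ := by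
    rw [hvbw, inner_add_right, real_inner_smul_right, horth]
    ring
  rw [hdecomp]
  calc |⟪u - p, w⟫| ≤ ‖u - p‖ * ‖w‖ := abs_real_inner_le_norm _ _
    _ ≤ 1 * ‖w‖ := by
        apply mul_le_mul_of_nonneg_right hup (norm_nonneg w)
    _ = Real.sqrt (1 - β^2) := by rw [one_mul, hwnorm]
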